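/- For the k-subset S = {2, 4, ..., 2k} of {1,...,n} (with 2k ≤ n), the number of k-subsets T of {1,...,n} with T ≤ S (componentwise) equals the Catalan number c_{k+1}. -/

import Mathlib

open Finset

/-- `f : Fin n → Option (Fin n)` represents an injective partial map of `{1,…,n}`
(elements 0-indexed): `f a = some x` means `a ∈ D(f)` with image `x`. Injectivity: -/
def IsPartialInj {n : ℕ} (f : Fin n → Option (Fin n)) : Prop :=
  ∀ a b x, f a = some x → f b = some x → a = b

/-- order preserving: `a < b` in the domain implies `f a < f b`. -/
def IsOrderPres {n : ℕ} (f : Fin n → Option (Fin n)) : Prop :=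
  ∀ a b x y, a < b → f a = some x → f b = some y → x < y

/-- order decreasing: `f a ≤ a` on the domain. -/
def IsOrderDec {n : ℕ} (f : Fin n → Option (Fin n)) : Prop :=
  ∀ a x, f a = some x → x ≤ a

/-- The planar upper triangular rook monoid `B_n`: order-preserving,
order-decreasing injective partial maps of `{1,…,n}`. -/
def Bn (n : ℕ) : Set (Fin n → Option (Fin n)) :=
  {f | IsPartialInj f ∧ IsOrderPres f ∧ IsOrderDec f}

/-- the componentwise partial order on subsets of `{1,…,n}`: `T ≤ S` iff `|T| = |S|`
and `t_i ≤ s_i` for all `i` where both are listed increasingly. -/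
def subLE {n : ℕ} (T S : Finset (Fin n)) : Prop :=
  T.card = S.card ∧ ∀ (i : ℕ) (hT : i < T.card) (hS : i < S.card),
    ((T.orderIsoOfFin rfl ⟨i, hT⟩ : T) : Fin n) ≤ ((S.orderIsoOfFin rfl ⟨i, hS⟩ : S) : Fin n)


/-- i-th smallest element of `T` is `≤ a` iff `T` has more than `i` elements `≤ a`. -/
lemma orderIso_le_iff {α : Type*} [LinearOrder α] [DecidableEq α] (T : Finset α) {k : ℕ}
    (hT : T.card = k) {i : ℕ} (hi : i < k) (a : α) :
    ((T.orderIsoOfFin hT ⟨i, hi⟩ : T) : α) ≤ a ↔ i < (T.filter (· ≤ a)).card := by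
  classical
  set φ := T.orderIsoOfFin hT with hφ
  constructor
  · intro hle
    have : (Finset.univ : Finset (Fin (i + 1))).card ≤ (T.filter (· ≤ a)).card := by
      apply Finset.card_le_card_of_injOn (fun j => (φ ⟨j.val, lt_of_le_of_lt (Nat.lt_succ_iff.mp j.isLt) hi⟩ : α))
      · intro j _
        refine Finset.mem_filter.mpr ⟨(φ _).2, ?_⟩
        refine le_trans ?_ hle
        have hji : (⟨j.val, lt_of_le_of_lt (Nat.lt_succ_iff.mp j.isLt) hi⟩ : Fin k) ≤ ⟨i, hi⟩ := by
          simp [Fin.le_def, Nat.lt_succ_iff.mp j.isLt]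
        exact_mod_cast φ.monotone hji
      · intro x _ y _ hxy
        have := φ.injective (Subtype.coe_injective hxy)
        simpa [Fin.ext_iff] using congrArg Fin.val this
    simpa using this
  · intro hcard
    by_contra hle
    push_neg at hle
    have : (T.filter (· ≤ a)).card ≤ (Finset.range i).card := by
      apply Finset.card_le_card_of_injOn (fun x => if hx : x ∈ T then (φ.symm ⟨x, hx⟩).val else 0)
      · intro x hx
        obtain ⟨hxT, hxa⟩ := Finset.mem_filter.mp hx
        simp only [dif_pos hxT, Finset.mem_range]
        have h1 : (⟨x, hxT⟩ : T) < φ ⟨i, hi⟩ := by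
          exact Subtype.coe_lt_coe.mp (lt_of_le_of_lt hxa hle)
        have := φ.symm.strictMono h1
        simpa [Fin.lt_def] using this
      · intro x hx y hy hxy
        obtain ⟨hxT, _⟩ := Finset.mem_filter.mp hx
        obtain ⟨hyT, _⟩ := Finset.mem_filter.mp hy
        simp only [dif_pos hxT, dif_pos hyT] at hxy
        have := φ.symm.injective (Fin.val_injective hxy)
        exact congrArg Subtype.val this
    simp only [Finset.card_range] at this
    omega

/-- The staircase set `{1, 3, …, 2k-1}` (0-indexed). -/
lemma Sk_lt {n k : ℕ} (h : 2 * k ≤ n) (i : Fin k) : 2 * i.val + 1 < n := by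
  have := i.isLt; omega

def Sk (n k : ℕ) (h : 2 * k ≤ n) : Finset (Fin n) :=
  Finset.image (fun i : Fin k => (⟨2 * i.val + 1, Sk_lt h i⟩ : Fin n)) Finset.univ

lemma Sk_card (n k : ℕ) (h : 2 * k ≤ n) : (Sk n k h).card = k := by
  rw [Sk, Finset.card_image_of_injective, Finset.card_univ, Fintype.card_fin]
  intro a b hab
  have := congrArg Fin.val hab
  simp only [Fin.ext_iff] at *
  omega

lemma Sk_orderEmb_val (n k : ℕ) (h : 2 * k ≤ n) {m : ℕ} (h' : (Sk n k h).card = m)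
    (i : Fin m) : (((Sk n k h).orderEmbOfFin h' i : Fin n) : ℕ) = 2 * i.val + 1 := by
  have hm : m = k := by rw [← h', Sk_card]
  subst hm
  have := Finset.orderEmbOfFin_unique
    (f := fun i : Fin m => (⟨2 * i.val + 1, by have := i.isLt; omega⟩ : Fin n)) h' ?_ ?_
  · exact congrArg Fin.val (congrFun this i).symm
  · intro x; exact Finset.mem_image_of_mem _ (Finset.mem_univ x)
  · intro a b hab
    simp only [Fin.mk_lt_mk]
    have : a.val < b.val := hab
    omega

lemma subLE_iff (n k : ℕ) (h : 2 * k ≤ n) (T : Finset (Fin n)) :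
    subLE T (Sk n k h) ↔ T.card = k ∧
      ∀ i < k, i < (T.filter (fun x : Fin n => (x : ℕ) ≤ 2 * i + 1)).card := by
  classical
  rw [subLE]
  constructor
  · rintro ⟨hcard, hle⟩
    refine ⟨hcard.trans (Sk_card n k h), fun i hik => ?_⟩
    have hT : i < T.card := by rw [hcard, Sk_card]; exact hik
    have hS : i < (Sk n k h).card := by rw [Sk_card]; exact hik
    have hle' := hle i hT hS
    rw [Finset.coe_orderIsoOfFin_apply, Finset.coe_orderIsoOfFin_apply] at hle'
    have h2 := (orderIso_le_iff T rfl hT ((Sk n k h).orderEmbOfFin rfl ⟨i, hS⟩)).mp (by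
      rw [Finset.coe_orderIsoOfFin_apply]; exact hle')
    refine lt_of_lt_of_le h2 (le_of_eq (congrArg Finset.card (Finset.filter_congr ?_)))
    intro x _
    simp [Fin.le_def, Sk_orderEmb_val n k h rfl ⟨i, hS⟩]
  · rintro ⟨hcard, hlt⟩
    have hcard' : T.card = (Sk n k h).card := by rw [hcard, Sk_card]
    refine ⟨hcard', fun i hT hS => ?_⟩
    have hik : i < k := by rw [← Sk_card n k h]; exact hS
    have h2 : i < (T.filter (· ≤ (Sk n k h).orderEmbOfFin rfl ⟨i, hS⟩)).card := by
      refine lt_of_lt_of_le (hlt i hik) (le_of_eq (congrArg Finset.card (Finset.filter_congr ?_)))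
      intro x _
      simp [Fin.le_def, Sk_orderEmb_val n k h rfl ⟨i, hS⟩]
    have := (orderIso_le_iff T rfl hT ((Sk n k h).orderEmbOfFin rfl ⟨i, hS⟩)).mpr h2
    rw [Finset.coe_orderIsoOfFin_apply] at this
    rw [Finset.coe_orderIsoOfFin_apply, Finset.coe_orderIsoOfFin_apply]
    exact this

open DyckStep in
/-- The step at position `j`. -/
def stepOf (A : Finset ℕ) (j : ℕ) : DyckStep := if j ∈ A then U else D

/-- A good subset of `range (2k)`. -/
def Good (k : ℕ) (A : Finset ℕ) : Prop :=
  A ⊆ Finset.range (2 * k) ∧ A.card = k ∧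
    ∀ i < k, i < (A.filter (fun x => x ≤ 2 * i + 1)).card

open DyckStep List

lemma count_U_map_range (A : Finset ℕ) (M : ℕ) :
    ((List.range M).map (stepOf A)).count U = ((Finset.range M).filter (· ∈ A)).card := by
  induction M with
  | zero => simp
  | succ m ih =>
      rw [List.range_succ, Finset.range_add_one, List.map_append, List.count_append]
      by_cases hm : m ∈ A
      · rw [Finset.filter_insert, if_pos hm, Finset.card_insert_of_notMem (by simp)]
        simp [stepOf, hm, ih]
      · rw [Finset.filter_insert, if_neg hm]
        simp [stepOf, hm, ih]

lemma count_UD_len (l : List DyckStep) : l.count U + l.count D = l.length := by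
  induction l with
  | nil => simp
  | cons a t ih => cases a <;> simp [List.count_cons] <;> omega

lemma good_prefix {k : ℕ} {A : Finset ℕ} (hA : Good k A) :
    ∀ j ≤ 2 * k, j ≤ 2 * ((Finset.range j).filter (· ∈ A)).card + 1 := by
  have key : ∀ i j, i < k → 2 * i + 1 < j → i < ((Finset.range j).filter (· ∈ A)).card := by
    intro i j hik hij
    refine lt_of_lt_of_le (hA.2.2 i hik) (Finset.card_le_card ?_)
    intro x hx
    obtain ⟨hx1, hx2⟩ := Finset.mem_filter.mp hx
    exact Finset.mem_filter.mpr ⟨Finset.mem_range.mpr (by omega), hx1⟩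
  intro j hj
  rcases Nat.even_or_odd j with ⟨i, hi⟩ | ⟨i, hi⟩
  · rcases Nat.eq_zero_or_pos i with rfl | hpos
    · omega
    · have := key (i - 1) j (by omega) (by omega)
      omega
  · rcases Nat.eq_zero_or_pos i with rfl | hpos
    · omega
    · have := key (i - 1) j (by omega) (by omega)
      omega

lemma filter_mem_range_eq {k : ℕ} {A : Finset ℕ} (hA : A ⊆ Finset.range (2 * k)) :
    (Finset.range (2 * k)).filter (· ∈ A) = A := by
  rw [Finset.filter_mem_eq_inter, Finset.inter_eq_right.mpr hA]

/-- The Dyck word associated to a good set. -/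
def dyckOf (k : ℕ) (A : Finset ℕ) (hA : Good k A) : DyckWord where
  toList := U :: ((List.range (2 * k)).map (stepOf A) ++ [D])
  count_U_eq_count_D := by
    have hU := count_U_map_range A (2 * k)
    rw [filter_mem_range_eq hA.1, hA.2.1] at hU
    have hlen : ((List.range (2 * k)).map (stepOf A)).length = 2 * k := by simp
    have := count_UD_len ((List.range (2 * k)).map (stepOf A))
    simp only [List.count_cons, List.count_append, List.count_singleton]
    simp only [hU] at this ⊢
    simp only [hlen] at this
    simp only [beq_iff_eq, beq_self_eq_true, reduceCtorEq, if_false, if_true, List.count_nil]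
    omega
  count_D_le_count_U := by
    intro m
    match m with
    | 0 => simp
    | (j + 1) =>
      rw [List.take_succ_cons]
      simp only [List.count_cons, reduceCtorEq, if_false, if_true]
      by_cases hj : j ≤ 2 * k
      · have htake : (((List.range (2 * k)).map (stepOf A)) ++ [D]).take j
            = (List.range j).map (stepOf A) := by
          rw [List.take_append]
          have h1 : j - ((List.range (2 * k)).map (stepOf A)).length = 0 := by simp; omega
          rw [h1, List.take_zero, List.append_nil, ← List.map_take, List.take_range,
            Nat.min_eq_left hj]
        rw [htake]
        have hU := count_U_map_range A j
        have hlen : ((List.range j).map (stepOf A)).length = j := by simp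
        have hsum := count_UD_len ((List.range j).map (stepOf A))
        have hpre := good_prefix hA j hj
        simp only [beq_iff_eq, beq_self_eq_true, reduceCtorEq, if_false, if_true, List.count_nil] at *
        omega
      · have htake : (((List.range (2 * k)).map (stepOf A)) ++ [D]).take j
            = ((List.range (2 * k)).map (stepOf A)) ++ [D] := by
          apply List.take_of_length_le; simp; omega
        rw [htake]
        have hU := count_U_map_range A (2 * k)
        rw [filter_mem_range_eq hA.1, hA.2.1] at hU
        have hlen : ((List.range (2 * k)).map (stepOf A)).length = 2 * k := by simp
        have hsum := count_UD_len ((List.range (2 * k)).map (stepOf A))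
        simp only [List.count_append, List.count_singleton]
        simp only [beq_iff_eq, beq_self_eq_true, reduceCtorEq, if_false, if_true, List.count_nil]
        omega

lemma semilength_dyckOf (k : ℕ) (A : Finset ℕ) (hA : Good k A) :
    (dyckOf k A hA).semilength = k + 1 := by
  have hU := count_U_map_range A (2 * k)
  rw [filter_mem_range_eq hA.1, hA.2.1] at hU
  simp only [DyckWord.semilength, dyckOf, List.count_cons, List.count_append,
    List.count_singleton, hU]
  simp only [beq_iff_eq, beq_self_eq_true, reduceCtorEq, if_false, if_true, List.count_nil]

/-- The good set associated to a Dyck word. -/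
def AOf (k : ℕ) (p : DyckWord) : Finset ℕ :=
  (Finset.range (2 * k)).filter (fun j => p.toList.tail.dropLast.getD j D = U)

lemma dyck_decomp {k : ℕ} (p : DyckWord) (hp : p.semilength = k + 1) :
    p.toList = U :: (p.toList.tail.dropLast ++ [D]) ∧ p.toList.tail.dropLast.length = 2 * k := by
  have hlen : p.toList.length = 2 * k + 2 := by
    rw [← p.two_mul_semilength_eq_length, hp]; ring
  have hne : p.toList ≠ [] := by intro hc; rw [hc] at hlen; simp at hlen
  have htne : p.toList.tail ≠ [] := by
    intro hc
    have := congrArg List.length hc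
    simp [List.length_tail, hlen] at this
  have hhead : p.toList.head hne = U := p.head_eq_U hne
  have hlast : p.toList.tail.getLast htne = D := by
    have h1 : p.toList.getLast hne = D := p.getLast_eq_D hne
    rw [List.getLast_eq_getElem] at h1 ⊢
    rw [List.getElem_tail]
    convert h1 using 2
    simp [List.length_tail, hlen]
  constructor
  · conv_lhs => rw [← List.cons_head_tail hne]
    rw [hhead]
    congr 1
    conv_lhs => rw [← List.dropLast_concat_getLast htne]
    rw [hlast]
  · have := congrArg List.length (List.dropLast_concat_getLast htne)
    simp only [List.length_append, List.length_singleton, List.length_tail, hlen] at this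
    omega

lemma wOf_AOf {k : ℕ} (p : DyckWord) (hp : p.semilength = k + 1) :
    (List.range (2 * k)).map (stepOf (AOf k p)) = p.toList.tail.dropLast := by
  obtain ⟨hdec, hwlen⟩ := dyck_decomp p hp
  apply List.ext_getElem
  · simp [hwlen]
  · intro j h1 h2
    simp only [List.getElem_map, List.getElem_range]
    have hj : j < 2 * k := by simpa using h1
    have hget : p.toList.tail.dropLast.getD j D = p.toList.tail.dropLast[j] := by
      rw [List.getD_eq_getElem?_getD, List.getElem?_eq_getElem (by omega), Option.getD_some]
    rw [stepOf]
    rcases (p.toList.tail.dropLast[j]).dichotomy with hU | hD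
    · rw [if_pos]
      · exact hU.symm
      · exact Finset.mem_filter.mpr ⟨Finset.mem_range.mpr hj, by rw [hget, hU]⟩
    · rw [if_neg]
      · exact hD.symm
      · intro hc
        have := (Finset.mem_filter.mp hc).2
        rw [hget, hD] at this
        simp at this

lemma good_AOf {k : ℕ} (p : DyckWord) (hp : p.semilength = k + 1) : Good k (AOf k p) := by
  obtain ⟨hdec, hwlen⟩ := dyck_decomp p hp
  have hmap := wOf_AOf p hp
  have hdec' : p.toList = U :: ((List.range (2 * k)).map (stepOf (AOf k p)) ++ [D]) := by
    rw [hmap, ← hdec]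
  have hsub : AOf k p ⊆ Finset.range (2 * k) := Finset.filter_subset _ _
  have hU := count_U_map_range (AOf k p) (2 * k)
  rw [filter_mem_range_eq hsub] at hU
  have hcard : (AOf k p).card = k := by
    have := hp
    rw [DyckWord.semilength, hdec'] at this
    simp only [List.count_cons, List.count_append, List.count_singleton, hU,
      beq_iff_eq, beq_self_eq_true, reduceCtorEq, if_false, if_true, List.count_nil] at this
    omega
  refine ⟨hsub, hcard, fun i hik => ?_⟩
  have hcond := p.count_D_le_count_U (2 * i + 3)
  rw [hdec'] at hcond
  have h22 : 2 * i + 2 ≤ 2 * k := by omega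
  have htake : (((List.range (2 * k)).map (stepOf (AOf k p))) ++ [D]).take (2 * i + 2)
      = (List.range (2 * i + 2)).map (stepOf (AOf k p)) := by
    rw [List.take_append]
    have h1 : 2 * i + 2 - ((List.range (2 * k)).map (stepOf (AOf k p))).length = 0 := by
      simp; omega
    rw [h1, List.take_zero, List.append_nil, ← List.map_take, List.take_range,
      Nat.min_eq_left h22]
  rw [show (2 * i + 3) = (2 * i + 2) + 1 from rfl, List.take_succ_cons, htake] at hcond
  have hU2 := count_U_map_range (AOf k p) (2 * i + 2)
  have hlen2 : ((List.range (2 * i + 2)).map (stepOf (AOf k p))).length = 2 * i + 2 := by simp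
  have hsum := count_UD_len ((List.range (2 * i + 2)).map (stepOf (AOf k p)))
  have heqf : (AOf k p).filter (fun x => x ≤ 2 * i + 1) = (Finset.range (2 * i + 2)).filter (· ∈ AOf k p) := by
    ext x
    simp only [Finset.mem_filter, Finset.mem_range]
    constructor
    · rintro ⟨h1, h2⟩; exact ⟨by omega, h1⟩
    · rintro ⟨h1, h2⟩; exact ⟨h2, by omega⟩
  rw [heqf]
  simp only [List.count_cons, beq_iff_eq, beq_self_eq_true, reduceCtorEq, if_false, if_true,
    List.count_nil] at hcond
  omega

lemma mem_lt_of_cond {n k : ℕ} {T : Finset (Fin n)} (hc : T.card = k)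
    (hcond : ∀ i < k, i < (T.filter (fun x : Fin n => (x : ℕ) ≤ 2 * i + 1)).card) :
    ∀ x ∈ T, (x : ℕ) < 2 * k := by
  intro x hx
  match k with
  | 0 => rw [Finset.card_eq_zero] at hc; simp [hc] at hx
  | m + 1 =>
    have h1 := hcond m (Nat.lt_succ_self m)
    have h2 : T.filter (fun x : Fin n => (x : ℕ) ≤ 2 * m + 1) = T :=
      Finset.eq_of_subset_of_card_le (Finset.filter_subset _ _) (by omega)
    rw [← h2] at hx
    have := (Finset.mem_filter.mp hx).2
    omega

lemma filter_attachFin (A : Finset ℕ) {n : ℕ} (h' : ∀ m ∈ A, m < n) (p : ℕ → Prop)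
    [DecidablePred p] :
    ((A.attachFin h').filter (fun x : Fin n => p x.val)).card = (A.filter p).card := by
  rw [← Finset.card_attachFin (A.filter p) (fun m hm => h' m (Finset.mem_filter.mp hm).1)]
  congr 1
  ext x
  simp [Finset.mem_attachFin, Finset.mem_filter]

lemma image_val_attachFin (A : Finset ℕ) {n : ℕ} (h' : ∀ m ∈ A, m < n) :
    (A.attachFin h').image Fin.val = A := by
  ext m
  simp only [Finset.mem_image, Finset.mem_attachFin]
  constructor
  · rintro ⟨y, hy, rfl⟩; exact hy
  · intro hm; exact ⟨⟨m, h' m hm⟩, hm, rfl⟩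

def e1 (n k : ℕ) (h : 2 * k ≤ n) :
    {T : Finset (Fin n) // subLE T (Sk n k h)} ≃ {A : Finset ℕ // Good k A} where
  toFun T := ⟨T.1.image Fin.val, by
    obtain ⟨hc, hcond⟩ := (subLE_iff n k h T.1).mp T.2
    refine ⟨?_, ?_, ?_⟩
    · intro x hx
      obtain ⟨y, hy, rfl⟩ := Finset.mem_image.mp hx
      exact Finset.mem_range.mpr (mem_lt_of_cond hc hcond y hy)
    · rw [Finset.card_image_of_injective _ Fin.val_injective, hc]
    · intro i hik
      refine lt_of_lt_of_le (hcond i hik) (le_of_eq ?_)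
      rw [Finset.filter_image, Finset.card_image_of_injective _ Fin.val_injective]⟩
  invFun A := ⟨A.1.attachFin (fun m hm => lt_of_lt_of_le (Finset.mem_range.mp (A.2.1 hm)) h), by
    rw [subLE_iff]
    refine ⟨by rw [Finset.card_attachFin, A.2.2.1], fun i hik => ?_⟩
    refine lt_of_lt_of_le (A.2.2.2 i hik) (le_of_eq ?_)
    exact (filter_attachFin A.1 _ (fun x => x ≤ 2 * i + 1)).symm⟩
  left_inv := by
    rintro ⟨T, hT⟩
    apply Subtype.ext
    ext x
    simp only [Finset.mem_attachFin, Finset.mem_image]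
    constructor
    · rintro ⟨y, hy, hyx⟩
      rwa [Fin.val_injective hyx] at hy
    · intro hx; exact ⟨x, hx, rfl⟩
  right_inv := by
    rintro ⟨A, hA⟩
    apply Subtype.ext
    exact image_val_attachFin A _

def e2 (k : ℕ) : {A : Finset ℕ // Good k A} ≃ {p : DyckWord // p.semilength = k + 1} where
  toFun A := ⟨dyckOf k A.1 A.2, semilength_dyckOf k A.1 A.2⟩
  invFun p := ⟨AOf k p.1, good_AOf p.1 p.2⟩
  left_inv := by
    rintro ⟨A, hA⟩
    apply Subtype.ext
    show AOf k (dyckOf k A hA) = A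
    have htd : (dyckOf k A hA).toList.tail.dropLast = (List.range (2 * k)).map (stepOf A) := by
      show (U :: ((List.range (2 * k)).map (stepOf A) ++ [D])).tail.dropLast = _
      rw [List.tail_cons, List.dropLast_concat]
    rw [AOf, htd]
    ext x
    simp only [Finset.mem_filter, Finset.mem_range]
    constructor
    · rintro ⟨hx, hU⟩
      have hg : ((List.range (2 * k)).map (stepOf A)).getD x D = stepOf A x := by
        rw [List.getD_eq_getElem?_getD, List.getElem?_eq_getElem (by simp [hx]), Option.getD_some]
        simp
      rw [hg, stepOf] at hU
      by_cases hxA : x ∈ A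
      · exact hxA
      · rw [if_neg hxA] at hU; exact absurd hU (by simp)
    · intro hxA
      have hx : x < 2 * k := Finset.mem_range.mp (hA.1 hxA)
      refine ⟨hx, ?_⟩
      have hg : ((List.range (2 * k)).map (stepOf A)).getD x D = stepOf A x := by
        rw [List.getD_eq_getElem?_getD, List.getElem?_eq_getElem (by simp [hx]), Option.getD_some]
        simp
      rw [hg, stepOf, if_pos hxA]
  right_inv := by
    rintro ⟨p, hp⟩
    apply Subtype.ext
    apply DyckWord.ext
    show U :: ((List.range (2 * k)).map (stepOf (AOf k p)) ++ [D]) = p.toList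
    rw [wOf_AOf p hp, ← (dyck_decomp p hp).1]

/-- for `S = {2, 4, …, 2k}` the number of `k`-subsets `T ≤ S` is the Catalan
number `c_{k+1}`. (`Fin n` is 0-indexed, so `2i` is represented by `2i - 1`.) -/
theorem card_below_even (n k : ℕ) (h : 2 * k ≤ n) :
    Nat.card {T : Finset (Fin n) // subLE T
        (Finset.image (fun i : Fin k =>
          (⟨2 * i.val + 1, by have := i.isLt; omega⟩ : Fin n)) Finset.univ)} =
      catalan (k + 1) := by
  rw [← DyckWord.card_dyckWord_semilength_eq_catalan (k + 1), ← Nat.card_eq_fintype_card]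
  exact Nat.card_congr ((e1 n k h).trans (e2 k))
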